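/- For every integer q ≥ 3 and every λ ∈ (0, 1), the choice δ = λ/(16q) satisfies (1 − (λq − λqδ)/(1+λ(q−1)))^λ · (1 + λδq/(1+λ(q−1−δq)))^{4(1+λ(q−1))/q} · (1 + λqδ/(1−λ))^{4(1−λ)(q−1)/q} < 1 − λ²/4. -/

import Mathlib

set_option maxHeartbeats 1000000 in
/-- For every integer `q ≥ 3` and every `λ ∈ (0,1)`, the choice
`δ = λ/(16q)` satisfies the contraction condition with rate `ν = λ²/4`. -/
theorem delta_choice_satisfies_contraction
    (q : ℕ) (hq : 3 ≤ q) (lam : ℝ) (hlam0 : 0 < lam) (hlam1 : lam < 1)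
    (δ : ℝ) (hδ : δ = lam / (16 * q)) :
    (1 - (lam * q - lam * q * δ) / (1 + lam * ((q : ℝ) - 1))) ^ lam *
      (1 + lam * δ * q / (1 + lam * ((q : ℝ) - 1 - δ * q)))
        ^ (4 * (1 + lam * ((q : ℝ) - 1)) / q) *
      (1 + lam * q * δ / (1 - lam)) ^ (4 * (1 - lam) * ((q : ℝ) - 1) / q)
    < 1 - lam ^ 2 / 4 := by
  have hq3 : (3:ℝ) ≤ (q:ℝ) := by exact_mod_cast hq
  have hQ0 : (0:ℝ) < (q:ℝ) := by linarith
  have hQne : ((q:ℝ)) ≠ 0 := ne_of_gt hQ0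
  have hδQ : δ * (q:ℝ) = lam / 16 := by
    rw [hδ]; field_simp
  have hδ0 : 0 < δ := by rw [hδ]; positivity
  have h1l : 0 < 1 - lam := by linarith
  have hD1 : (0:ℝ) < 1 + lam * ((q:ℝ) - 1) := by nlinarith
  have hD2 : (1:ℝ) ≤ 1 + lam * ((q:ℝ) - 1 - δ * (q:ℝ)) := by
    rw [hδQ]; nlinarith
  have hD2' : (0:ℝ) < 1 + lam * ((q:ℝ) - 1 - δ * (q:ℝ)) :=
    lt_of_lt_of_le one_pos hD2
  have hlqδ : lam * (q:ℝ) * δ = lam ^ 2 / 16 := by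
    rw [hδ]; field_simp
  have hlδq : lam * δ * (q:ℝ) = lam ^ 2 / 16 := by
    rw [hδ]; field_simp
  -- positivity of the three bases
  have ha : 0 < 1 - (lam * q - lam * q * δ) / (1 + lam * ((q : ℝ) - 1)) := by
    rw [sub_pos, div_lt_one hD1]
    nlinarith [mul_pos (mul_pos hlam0 hQ0) hδ0]
  have htB0 : 0 ≤ lam * δ * q / (1 + lam * ((q : ℝ) - 1 - δ * q)) :=
    div_nonneg (by positivity) hD2'.le
  have hb : 0 < 1 + lam * δ * q / (1 + lam * ((q : ℝ) - 1 - δ * q)) := by linarith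
  have htC0 : 0 ≤ lam * q * δ / (1 - lam) := div_nonneg (by positivity) h1l.le
  have hc : 0 < 1 + lam * q * δ / (1 - lam) := by linarith
  -- exponent nonnegativity
  have hpB0 : 0 ≤ 4 * (1 + lam * ((q : ℝ) - 1)) / q := by positivity
  have hpC0 : 0 ≤ 4 * (1 - lam) * ((q : ℝ) - 1) / q := by
    apply div_nonneg _ hQ0.le
    have : (0:ℝ) ≤ (q:ℝ) - 1 := by linarith
    positivity
  rw [Real.rpow_def_of_pos ha, Real.rpow_def_of_pos hb, Real.rpow_def_of_pos hc,
    ← Real.exp_add, ← Real.exp_add]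
  -- bound each log by (base - 1)
  have la := Real.log_le_sub_one_of_pos ha
  have lb := Real.log_le_sub_one_of_pos hb
  have lc := Real.log_le_sub_one_of_pos hc
  have h1 : Real.log (1 - (lam * q - lam * q * δ) / (1 + lam * ((q : ℝ) - 1))) * lam
      ≤ ((1 - (lam * q - lam * q * δ) / (1 + lam * ((q : ℝ) - 1))) - 1) * lam :=
    mul_le_mul_of_nonneg_right la hlam0.le
  have h2 : Real.log (1 + lam * δ * q / (1 + lam * ((q : ℝ) - 1 - δ * q)))
        * (4 * (1 + lam * ((q : ℝ) - 1)) / q)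
      ≤ ((1 + lam * δ * q / (1 + lam * ((q : ℝ) - 1 - δ * q))) - 1)
        * (4 * (1 + lam * ((q : ℝ) - 1)) / q) :=
    mul_le_mul_of_nonneg_right lb hpB0
  have h3 : Real.log (1 + lam * q * δ / (1 - lam))
        * (4 * (1 - lam) * ((q : ℝ) - 1) / q)
      ≤ ((1 + lam * q * δ / (1 - lam)) - 1)
        * (4 * (1 - lam) * ((q : ℝ) - 1) / q) :=
    mul_le_mul_of_nonneg_right lc hpC0
  -- bound term A
  have hx : (47/48) * lam ≤ (lam * q - lam * q * δ) / (1 + lam * ((q : ℝ) - 1)) := by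
    rw [le_div_iff₀ hD1]
    nlinarith [mul_nonneg hlam0.le h1l.le,
      mul_nonneg hlam0.le (sub_nonneg.2 hq3),
      mul_nonneg (mul_nonneg hlam0.le h1l.le) (sub_nonneg.2 hq3)]
  have hA : ((1 - (lam * q - lam * q * δ) / (1 + lam * ((q : ℝ) - 1))) - 1) * lam
      ≤ -(47/48) * lam ^ 2 := by
    have := mul_le_mul_of_nonneg_right hx hlam0.le
    nlinarith
  -- bound term B
  have htB : lam * δ * q / (1 + lam * ((q : ℝ) - 1 - δ * q)) ≤ lam ^ 2 / 16 := by
    rw [hlδq]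
    exact div_le_self (by positivity) hD2
  have hpB : 4 * (1 + lam * ((q : ℝ) - 1)) / q ≤ 4 := by
    rw [div_le_iff₀ hQ0]
    linarith [mul_nonneg h1l.le (sub_nonneg.2 (by linarith : (1:ℝ) ≤ (q:ℝ)))]
  have hB : ((1 + lam * δ * q / (1 + lam * ((q : ℝ) - 1 - δ * q))) - 1)
      * (4 * (1 + lam * ((q : ℝ) - 1)) / q) ≤ lam ^ 2 / 4 := by
    have h := mul_le_mul htB hpB hpB0 (by positivity : (0:ℝ) ≤ lam ^ 2 / 16)
    calc ((1 + lam * δ * q / (1 + lam * ((q : ℝ) - 1 - δ * q))) - 1)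
          * (4 * (1 + lam * ((q : ℝ) - 1)) / q)
        = lam * δ * q / (1 + lam * ((q : ℝ) - 1 - δ * q))
          * (4 * (1 + lam * ((q : ℝ) - 1)) / q) := by ring
      _ ≤ lam ^ 2 / 16 * 4 := h
      _ = lam ^ 2 / 4 := by ring
  -- bound term C
  have hC : ((1 + lam * q * δ / (1 - lam)) - 1)
      * (4 * (1 - lam) * ((q : ℝ) - 1) / q) ≤ lam ^ 2 / 4 := by
    have heq : ((1 + lam * q * δ / (1 - lam)) - 1)
        * (4 * (1 - lam) * ((q : ℝ) - 1) / q)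
        = lam ^ 2 * ((q:ℝ) - 1) / (4 * q) := by
      rw [hlqδ]
      field_simp
      ring
    rw [heq, div_le_div_iff₀ (by positivity) (by norm_num)]
    nlinarith [sq_nonneg lam]
  -- combine
  have key : Real.log (1 - (lam * q - lam * q * δ) / (1 + lam * ((q : ℝ) - 1))) * lam
      + Real.log (1 + lam * δ * q / (1 + lam * ((q : ℝ) - 1 - δ * q)))
        * (4 * (1 + lam * ((q : ℝ) - 1)) / q)
      + Real.log (1 + lam * q * δ / (1 - lam))
        * (4 * (1 - lam) * ((q : ℝ) - 1) / q)
      ≤ -(23/48) * lam ^ 2 := by linarith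
  refine lt_of_le_of_lt (Real.exp_le_exp.2 key) ?_
  have hu : 0 < (23/48) * lam ^ 2 := by positivity
  have h4 : Real.exp (-(23/48) * lam ^ 2)
      = (Real.exp ((23/48) * lam ^ 2))⁻¹ := by
    rw [← Real.exp_neg]; ring_nf
  have h5 : 1 + (23/48) * lam ^ 2 ≤ Real.exp ((23/48) * lam ^ 2) := by
    have := Real.add_one_le_exp ((23/48) * lam ^ 2)
    linarith
  have h6 : (Real.exp ((23/48) * lam ^ 2))⁻¹ ≤ (1 + (23/48) * lam ^ 2)⁻¹ := by
    apply inv_anti₀ (by positivity) h5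
  have hl2 : lam ^ 2 < 1 := by nlinarith
  have h7 : (1 + (23/48) * lam ^ 2)⁻¹ < 1 - lam ^ 2 / 4 := by
    rw [inv_lt_comm₀ (by positivity) (by nlinarith : (0:ℝ) < 1 - lam ^ 2 / 4), ← one_div,
      div_lt_iff₀ (by nlinarith : (0:ℝ) < 1 - lam ^ 2 / 4)]
    nlinarith [mul_nonneg (sq_nonneg lam) (sub_nonneg.2 hl2.le), mul_pos hlam0 hlam0]
  rw [h4]
  exact lt_of_le_of_lt h6 h7
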